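/- The words xyxy and yxyx can form an identity of M(ab²a, a²b²) only with each other: if M(ab²a, a²b²) satisfies an identity xyxy ≈ v for a word v in variables x, y, then v ∈ {xyxy, yxyx}. -/

import Mathlib

open scoped Classical

def Fac (W : Set (List ℕ)) (u : List ℕ) : Prop := u = [] ∨ ∃ w ∈ W, u <:+: w

lemma Fac.of_infix {W : Set (List ℕ)} {u v : List ℕ} (h : Fac W u) (hv : v <:+: u) :
    Fac W v := by
  rcases h with rfl | ⟨w, hw, hu⟩
  · left; simpa using hv
  · exact Or.inr ⟨w, hw, hv.trans hu⟩

def MWord (W : Set (List ℕ)) : Type := Option {u : List ℕ // Fac W u}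

noncomputable def mwMul {W : Set (List ℕ)} : MWord W → MWord W → MWord W
  | some a, some b =>
      if h : Fac W (a.1 ++ b.1) then some ⟨a.1 ++ b.1, h⟩ else none
  | _, _ => none

lemma mwMul_none_left {W : Set (List ℕ)} (b : MWord W) : mwMul none b = none := by
  cases b <;> rfl

lemma mwMul_none_right {W : Set (List ℕ)} (a : MWord W) : mwMul a none = none := by
  cases a <;> rfl

lemma mwMul_some_some {W : Set (List ℕ)} (a b : {u : List ℕ // Fac W u}) :
    mwMul (some a) (some b) =
      if h : Fac W (a.1 ++ b.1) then some ⟨a.1 ++ b.1, h⟩ else none := rfl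

noncomputable instance MWord.monoid (W : Set (List ℕ)) : Monoid (MWord W) where
  mul := mwMul
  one := some ⟨[], Or.inl rfl⟩
  one_mul a := by
    show mwMul (some ⟨[], Or.inl rfl⟩) a = a
    cases a with
    | none => rfl
    | some a => exact dif_pos a.2
  mul_one a := by
    show mwMul a (some ⟨[], Or.inl rfl⟩) = a
    cases a with
    | none => rfl
    | some a =>
      have h : Fac W (a.1 ++ []) := by simpa using a.2
      rw [mwMul_some_some, dif_pos h]
      exact congrArg some (Subtype.ext (List.append_nil _))
  mul_assoc a b c := by
    show mwMul (mwMul a b) c = mwMul a (mwMul b c)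
    cases a with
    | none => cases b <;> cases c <;> rfl
    | some a =>
      cases b with
      | none => cases c <;> rfl
      | some b =>
        cases c with
        | none => erw [mwMul_none_right, mwMul_none_right]
        | some c =>
          by_cases hab : Fac W (a.1 ++ b.1)
          · by_cases hbc : Fac W (b.1 ++ c.1)
            · rw [mwMul_some_some b c, dif_pos hbc, mwMul_some_some a b, dif_pos hab,
                mwMul_some_some, mwMul_some_some]
              by_cases habc : Fac W (a.1 ++ b.1 ++ c.1)
              · have habc' : Fac W (a.1 ++ (b.1 ++ c.1)) := by
                  rwa [← List.append_assoc]
                rw [dif_pos habc, dif_pos habc']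
                exact congrArg some (Subtype.ext (List.append_assoc _ _ _))
              · have habc' : ¬ Fac W (a.1 ++ (b.1 ++ c.1)) := by
                  rwa [← List.append_assoc]
                rw [dif_neg habc, dif_neg habc']
            · erw [mwMul_some_some b c, dif_neg hbc, mwMul_none_right,
                mwMul_some_some a b, dif_pos hab, mwMul_some_some]
              have : ¬ Fac W (a.1 ++ b.1 ++ c.1) := fun h =>
                hbc (h.of_infix (by rw [List.append_assoc]; exact
                  (List.suffix_append a.1 (b.1 ++ c.1)).isInfix))
              rw [dif_neg this]
          · erw [mwMul_some_some a b, dif_neg hab, mwMul_none_left]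
            cases hc : mwMul (some b) (some c) with
            | none => erw [mwMul_none_right]
            | some bc =>
              rw [mwMul_some_some]
              have hbc : bc.1 = b.1 ++ c.1 := by
                rw [mwMul_some_some] at hc
                by_cases h : Fac W (b.1 ++ c.1)
                · rw [dif_pos h] at hc; cases hc; rfl
                · rw [dif_neg h] at hc; cases hc
              have : ¬ Fac W (a.1 ++ bc.1) := by
                rw [hbc]
                exact fun h => hab (h.of_infix (by
                  rw [← List.append_assoc]
                  exact (List.prefix_append (a.1 ++ b.1) c.1).isInfix))
              rw [dif_neg this]

/-- A monoid `M` satisfies the identity `u ≈ v` if every substitution of elements of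
`M` for the variables makes the two sides equal. -/
def SatM (M : Type*) [Monoid M] (u v : List ℕ) : Prop :=
  ∀ f : ℕ → M, (u.map f).prod = (v.map f).prod

abbrev W01 : Set (List ℕ) := {[0, 1, 1, 0], [0, 0, 1, 1]}

lemma fac_iff (u : List ℕ) : Fac W01 u ↔ (u = [] ∨ u <:+: [0,1,1,0] ∨ u <:+: [0,0,1,1]) := by
  simp [Fac, W01, or_assoc]

instance facDec : ∀ u, Decidable (Fac W01 u) := fun u => decidable_of_iff _ (fac_iff u).symm

noncomputable def emb (u : List ℕ) (h : Fac W01 u) : MWord W01 := some ⟨u, h⟩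

lemma emb_inj {u w : List ℕ} {hu : Fac W01 u} {hw : Fac W01 w}
    (h : emb u hu = emb w hw) : u = w := by
  have h' : (some ⟨u, hu⟩ : Option {x // Fac W01 x}) = some ⟨w, hw⟩ := h
  simpa using h'

lemma prod_map (g : ℕ → List ℕ) (hg : ∀ n, Fac W01 (g n)) (l : List ℕ) :
    (l.map (fun n => emb (g n) (hg n))).prod =
      if h : Fac W01 (l.flatMap g) then emb (l.flatMap g) h else none := by
  induction l with
  | nil =>
    have h0 : Fac W01 ([].flatMap g) := Or.inl rfl
    erw [List.map_nil, List.prod_nil, dif_pos h0]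
    rfl
  | cons a l ih =>
    rw [List.map_cons, List.prod_cons, ih]
    by_cases h1 : Fac W01 (l.flatMap g)
    · erw [dif_pos h1]
      show mwMul (some ⟨g a, hg a⟩) (some ⟨l.flatMap g, h1⟩) = _
      rw [mwMul_some_some]
      simp only [List.flatMap_cons, emb]
      rfl
    · erw [dif_neg h1]
      have h2 : ¬ Fac W01 ((a :: l).flatMap g) := by
        intro h
        exact h1 (h.of_infix (by
          simp only [List.flatMap_cons]
          exact (List.suffix_append (g a) (l.flatMap g)).isInfix))
      erw [dif_neg h2]
      exact mwMul_none_right _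

def g1 : ℕ → List ℕ := fun n => if n = 0 then [0] else []
def g2 : ℕ → List ℕ := fun n => if n = 1 then [1] else []
def g3 : ℕ → List ℕ := fun n => if n = 0 then [0] else if n = 1 then [1] else []
def g4 : ℕ → List ℕ := fun n => if n = 0 then [1] else if n = 1 then [0] else []

lemma hg1 : ∀ n, Fac W01 (g1 n) := by
  intro n; unfold g1; split <;> decide
lemma hg2 : ∀ n, Fac W01 (g2 n) := by
  intro n; unfold g2; split <;> decide
lemma hg3 : ∀ n, Fac W01 (g3 n) := by
  intro n; unfold g3; split <;> [skip; split] <;> decide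
lemma hg4 : ∀ n, Fac W01 (g4 n) := by
  intro n; unfold g4; split <;> [skip; split] <;> decide

lemma flatMap_g1 (v : List ℕ) (hv : ∀ a ∈ v, a = 0 ∨ a = 1) :
    v.flatMap g1 = List.replicate (v.count 0) 0 := by
  induction v with
  | nil => simp
  | cons a l ih =>
    have ih' := ih (fun b hb => hv b (List.mem_cons_of_mem _ hb))
    rcases hv a List.mem_cons_self with rfl | rfl <;>
      simp [g1, List.count_cons, ih', List.replicate_succ]

lemma flatMap_g2 (v : List ℕ) (hv : ∀ a ∈ v, a = 0 ∨ a = 1) :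
    v.flatMap g2 = List.replicate (v.count 1) 1 := by
  induction v with
  | nil => simp
  | cons a l ih =>
    have ih' := ih (fun b hb => hv b (List.mem_cons_of_mem _ hb))
    rcases hv a List.mem_cons_self with rfl | rfl <;>
      simp [g2, List.count_cons, ih', List.replicate_succ]

lemma flatMap_g3 (v : List ℕ) (hv : ∀ a ∈ v, a = 0 ∨ a = 1) :
    v.flatMap g3 = v := by
  induction v with
  | nil => simp
  | cons a l ih =>
    have ih' := ih (fun b hb => hv b (List.mem_cons_of_mem _ hb))
    rcases hv a List.mem_cons_self with rfl | rfl <;> simp [g3, ih']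

lemma flatMap_g4 (v : List ℕ) (hv : ∀ a ∈ v, a = 0 ∨ a = 1) :
    v.flatMap g4 = v.map (fun n => 1 - n) := by
  induction v with
  | nil => simp
  | cons a l ih =>
    have ih' := ih (fun b hb => hv b (List.mem_cons_of_mem _ hb))
    rcases hv a List.mem_cons_self with rfl | rfl <;> simp [g4, ih']

lemma len_eq (v : List ℕ) (hv : ∀ a ∈ v, a = 0 ∨ a = 1) :
    v.length = v.count 0 + v.count 1 := by
  induction v with
  | nil => simp
  | cons a l ih =>
    have ih' := ih (fun b hb => hv b (List.mem_cons_of_mem _ hb))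
    rcases hv a List.mem_cons_self with rfl | rfl <;>
      simp [List.count_cons, ih'] <;> omega

/-- The words `xyxy` and `yxyx` can form an identity of `M(ab²a, a²b²)` only with
each other (here `x = 0`, `y = 1`, `a = 0`, `b = 1`): if `v` is a word in the
variables `x, y` and `M(ab²a, a²b²) ⊨ xyxy ≈ v`, then `v = xyxy` or `v = yxyx`. -/
theorem xyxy_yxyx (v : List ℕ) (hv : ∀ a ∈ v, a = 0 ∨ a = 1)
    (hsat : SatM (MWord ({[0, 1, 1, 0], [0, 0, 1, 1]} : Set (List ℕ))) [0, 1, 0, 1] v) :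
    v = [0, 1, 0, 1] ∨ v = [1, 0, 1, 0] := by
  -- substitution x ↦ a, y ↦ 1 : pins count of 0
  have key1 := hsat (fun n => emb (g1 n) (hg1 n))
  rw [prod_map g1 hg1, prod_map g1 hg1] at key1
  rw [show [0,1,0,1].flatMap g1 = [0,0] from rfl, flatMap_g1 v hv] at key1
  erw [dif_pos (by decide : Fac W01 [0,0])] at key1
  have hc0 : v.count 0 = 2 := by
    by_cases h : Fac W01 (List.replicate (v.count 0) 0)
    · erw [dif_pos h] at key1
      have := congrArg List.length (emb_inj key1)
      simp at this
      omega
    · erw [dif_neg h] at key1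
      simp [emb] at key1
  -- substitution x ↦ 1, y ↦ b : pins count of 1
  have key2 := hsat (fun n => emb (g2 n) (hg2 n))
  rw [prod_map g2 hg2, prod_map g2 hg2] at key2
  rw [show [0,1,0,1].flatMap g2 = [1,1] from rfl, flatMap_g2 v hv] at key2
  erw [dif_pos (by decide : Fac W01 [1,1])] at key2
  have hc1 : v.count 1 = 2 := by
    by_cases h : Fac W01 (List.replicate (v.count 1) 1)
    · erw [dif_pos h] at key2
      have := congrArg List.length (emb_inj key2)
      simp at this
      omega
    · erw [dif_neg h] at key2
      simp [emb] at key2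
  -- substitution x ↦ a, y ↦ b : v is not a factor
  have key3 := hsat (fun n => emb (g3 n) (hg3 n))
  rw [prod_map g3 hg3, prod_map g3 hg3] at key3
  erw [show [0,1,0,1].flatMap g3 = [0,1,0,1] from rfl, flatMap_g3 v hv,
    dif_neg (by decide : ¬ Fac W01 [0,1,0,1])] at key3
  have h3 : ¬ Fac W01 v := by
    intro h
    erw [dif_pos h] at key3
    simp [emb] at key3
  -- substitution x ↦ b, y ↦ a : the letter-swapped v is not a factor
  have key4 := hsat (fun n => emb (g4 n) (hg4 n))
  rw [prod_map g4 hg4, prod_map g4 hg4] at key4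
  erw [show [0,1,0,1].flatMap g4 = [1,0,1,0] from rfl, flatMap_g4 v hv,
    dif_neg (by decide : ¬ Fac W01 [1,0,1,0])] at key4
  have h4 : ¬ Fac W01 (v.map (fun n => 1 - n)) := by
    intro h
    erw [dif_pos h] at key4
    simp [emb] at key4
  -- v has length 4
  have hl : v.length = 4 := by rw [len_eq v hv, hc0, hc1]
  obtain ⟨a, b, c, d, rfl⟩ : ∃ a b c d, v = [a, b, c, d] := by
    rcases v with _ | ⟨a, v⟩; · simp at hl
    rcases v with _ | ⟨b, v⟩; · simp at hl
    rcases v with _ | ⟨c, v⟩; · simp at hl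
    rcases v with _ | ⟨d, v⟩; · simp at hl
    rcases v with _ | ⟨e, v⟩
    · exact ⟨a, b, c, d, rfl⟩
    · simp at hl
  have ha := hv a (by simp)
  have hb := hv b (by simp)
  have hc := hv c (by simp)
  have hd := hv d (by simp)
  clear key1 key2 key3 key4 hsat hv hl
  rcases ha with rfl | rfl <;> rcases hb with rfl | rfl <;>
    rcases hc with rfl | rfl <;> rcases hd with rfl | rfl <;>
    first
      | (left; rfl)
      | (right; rfl)
      | (exact absurd hc0 (by decide))
      | (exact absurd hc1 (by decide))
      | (exact (h3 (by decide)).elim)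
      | (exact (h4 (by decide)).elim)
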